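/- For all a, b > 0 and ν ∈ [0,1]: (1/2)·ν·(1−ν)·(ln a − ln b)²·min(a,b) ≤ (1−ν)·a + ν·b − a^(1−ν)·b^ν ≤ (1/2)·ν·(1−ν)·(ln a − ln b)²·max(a,b). -/

import Mathlib

open Real Set

private lemma aux_deriv (a b la lb c ε : ℝ) :
    ∀ x : ℝ, HasDerivAt (fun x : ℝ => ε * ((1-x)*a + x*b - Real.exp (la + x*(lb-la))) - c*(x - x^2))
      (ε * (-a + b - (lb-la) * Real.exp (la + x*(lb-la))) - c*(1 - 2*x)) x := by
  intro x
  have h1 : HasDerivAt (fun x : ℝ => la + x*(lb-la)) (lb-la) x := by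
    simpa using ((hasDerivAt_id x).mul_const (lb-la)).const_add la
  have h2 : HasDerivAt (fun x : ℝ => Real.exp (la + x*(lb-la))) ((lb-la) * Real.exp (la + x*(lb-la))) x := by
    simpa [mul_comm] using h1.exp
  have h3 : HasDerivAt (fun x : ℝ => (1-x)*a + x*b - Real.exp (la + x*(lb-la)))
      (-a + b - (lb-la) * Real.exp (la + x*(lb-la))) x := by
    have : HasDerivAt (fun x : ℝ => (1-x)*a + x*b) (-a + b) x := by
      have := ((hasDerivAt_id x).const_sub 1 |>.mul_const a).add ((hasDerivAt_id x).mul_const b)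
      exact this.congr_deriv (by ring)
    exact this.sub h2
  have h4 : HasDerivAt (fun x : ℝ => c*(x - x^2)) (c*(1 - 2*x)) x := by
    have := ((hasDerivAt_id x).sub (hasDerivAt_pow 2 x)).const_mul c
    simpa using this.congr_deriv (by ring)
  exact (h3.const_mul ε).sub h4

private lemma aux_concave (a b la lb c ε : ℝ)
    (h : ∀ x ∈ Set.Icc (0:ℝ) 1, 2*c ≤ ε * ((lb-la)^2 * Real.exp (la + x*(lb-la)))) :
    ConcaveOn ℝ (Set.Icc (0:ℝ) 1)
      (fun x : ℝ => ε * ((1-x)*a + x*b - Real.exp (la + x*(lb-la))) - c*(x - x^2)) := by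
  set f := fun x : ℝ => ε * ((1-x)*a + x*b - Real.exp (la + x*(lb-la))) - c*(x - x^2) with hf
  have hd1 : deriv f = fun x => ε * (-a + b - (lb-la) * Real.exp (la + x*(lb-la))) - c*(1 - 2*x) := by
    funext x; exact (aux_deriv a b la lb c ε x).deriv
  have hd2 : ∀ x : ℝ, HasDerivAt (deriv f)
      (ε * (-(lb-la)^2 * Real.exp (la + x*(lb-la))) + 2*c) x := by
    intro x
    rw [hd1]
    have h1 : HasDerivAt (fun x : ℝ => la + x*(lb-la)) (lb-la) x := by
      simpa using ((hasDerivAt_id x).mul_const (lb-la)).const_add la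
    have h2 : HasDerivAt (fun x : ℝ => Real.exp (la + x*(lb-la))) ((lb-la) * Real.exp (la + x*(lb-la))) x := by
      simpa [mul_comm] using h1.exp
    have h3 := ((h2.const_mul (lb-la)).const_sub (-a+b)).const_mul ε
    have h4 : HasDerivAt (fun x : ℝ => c*(1 - 2*x)) (-(2*c)) x := by
      have := ((hasDerivAt_id x).const_mul 2 |>.const_sub 1).const_mul c
      simpa using this.congr_deriv (by ring)
    exact (h3.sub h4).congr_deriv (by ring)
  apply concaveOn_of_deriv2_nonpos (convex_Icc 0 1)
  · exact Continuous.continuousOn (by fun_prop)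
  · intro x hx; exact (aux_deriv a b la lb c ε x).differentiableAt.differentiableWithinAt
  · intro x hx; exact (hd2 x).differentiableAt.differentiableWithinAt
  · intro x hx
    have hx' : x ∈ Set.Icc (0:ℝ) 1 := interior_subset hx
    have h2' : deriv (deriv f) x = ε * (-(lb-la)^2 * Real.exp (la + x*(lb-la))) + 2*c :=
      (hd2 x).deriv
    simp only [Function.iterate_succ, Function.iterate_zero, Function.comp, id]
    rw [h2']
    nlinarith [h x hx']

theorem stmt_2 (a b : ℝ) (ha : 0 < a) (hb : 0 < b) (ν : ℝ) (hν : ν ∈ Set.Icc (0:ℝ) 1) :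
    1/2 * ν * (1 - ν) * (Real.log a - Real.log b)^2 * min a b
      ≤ (1 - ν) * a + ν * b - a ^ (1 - ν) * b ^ ν ∧
    (1 - ν) * a + ν * b - a ^ (1 - ν) * b ^ ν
      ≤ 1/2 * ν * (1 - ν) * (Real.log a - Real.log b)^2 * max a b := by
  obtain ⟨h0, h1⟩ := hν
  set la := Real.log a
  set lb := Real.log b
  have hrw : a ^ (1 - ν) * b ^ ν = Real.exp (la + ν*(lb-la)) := by
    rw [Real.rpow_def_of_pos ha, Real.rpow_def_of_pos hb, ← Real.exp_add]
    simp only [la, lb]; ring_nf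
  -- exp bounds on the segment
  have hexp : ∀ x ∈ Set.Icc (0:ℝ) 1,
      min a b ≤ Real.exp (la + x*(lb-la)) ∧ Real.exp (la + x*(lb-la)) ≤ max a b := by
    intro x ⟨hx0, hx1⟩
    have hmn : min la lb ≤ la + x*(lb-la) ∧ la + x*(lb-la) ≤ max la lb := by
      rcases le_total la lb with h | h
      · constructor
        · rw [min_eq_left h]; nlinarith
        · rw [max_eq_right h]; nlinarith
      · constructor
        · rw [min_eq_right h]; nlinarith
        · rw [max_eq_left h]; nlinarith
    constructor
    · calc min a b = Real.exp (min la lb) := by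
            rcases le_total a b with h | h
            · rw [min_eq_left h, min_eq_left (Real.log_le_log_iff ha hb |>.mpr h), Real.exp_log ha]
            · rw [min_eq_right h, min_eq_right (Real.log_le_log_iff hb ha |>.mpr h), Real.exp_log hb]
        _ ≤ _ := Real.exp_le_exp.mpr hmn.1
    · calc Real.exp (la + x*(lb-la)) ≤ Real.exp (max la lb) := Real.exp_le_exp.mpr hmn.2
        _ = max a b := by
            rcases le_total a b with h | h
            · rw [max_eq_right h, max_eq_right (Real.log_le_log_iff ha hb |>.mpr h), Real.exp_log hb]
            · rw [max_eq_left h, max_eq_left (Real.log_le_log_iff hb ha |>.mpr h), Real.exp_log ha]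
  have hla : Real.exp la = a := Real.exp_log ha
  have hlb : Real.exp lb = b := Real.exp_log hb
  have key : ∀ c ε : ℝ, (∀ x ∈ Set.Icc (0:ℝ) 1, 2*c ≤ ε * ((lb-la)^2 * Real.exp (la + x*(lb-la)))) →
      c*(ν - ν^2) ≤ ε * ((1-ν)*a + ν*b - Real.exp (la + ν*(lb-la))) := by
    intro c ε hc
    have hcv := aux_concave a b la lb c ε hc
    have := hcv.2 (Set.left_mem_Icc.mpr zero_le_one) (Set.right_mem_Icc.mpr zero_le_one)
      (by linarith : (0:ℝ) ≤ 1-ν) h0 (by ring)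
    simp only [smul_eq_mul] at this
    norm_num at this
    rw [hla, hlb] at this
    nlinarith [this]
  constructor
  · -- lower bound: ε = 1, c = 1/2 (la-lb)^2 min a b
    have := key (1/2 * (la-lb)^2 * min a b) 1 ?_
    · rw [hrw]; nlinarith [this]
    · intro x hx
      have := (hexp x hx).1
      have hmin : 0 ≤ min a b := le_min ha.le hb.le
      nlinarith [sq_nonneg (la-lb), sq_nonneg (lb-la)]
  · -- upper bound: ε = -1, c = -(1/2) (la-lb)^2 max a b
    have := key (-(1/2 * (la-lb)^2 * max a b)) (-1) ?_
    · rw [hrw]; nlinarith [this]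
    · intro x hx
      have := (hexp x hx).2
      nlinarith [sq_nonneg (la-lb)]
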